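/- Let G be a group and H_1α_1, …, H_sα_s a coset partition of G where each H_i is a subgroup of finite index d_i. Then the sum of the reciprocals of the indices, ∑_{i=1}^s 1/d_i, equals 1. -/

import Mathlib

/-- For a coset partition of a group `G` by right cosets `H i * α i` of finite-index
subgroups, the reciprocals of the indices sum to `1`. -/
theorem coset_partition_sum_reciprocals
    {G : Type*} [Group G] (s : ℕ)
    (H : Fin s → Subgroup G) (α : Fin s → G)
    (hfin : ∀ i, (H i).FiniteIndex)
    (hpart : ∀ g : G, ∃! i : Fin s, g * (α i)⁻¹ ∈ H i) :
    ∑ i : Fin s, (1 : ℚ) / ((H i).index : ℚ) = 1 := by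
  classical
  -- Reformulate as a left-coset partition.
  have hpart' : ∀ g : G, ∃! i : Fin s, α i * g ∈ H i := by
    intro g
    obtain ⟨i, hi, hu⟩ := hpart g⁻¹
    refine ⟨i, ?_, fun j hj => hu j ?_⟩
    · have := (H i).inv_mem hi
      simpa [mul_inv_rev] using this
    · have := (H j).inv_mem hj
      simpa [mul_inv_rev] using this
  set K : Subgroup G := ⨅ i, H i with hKdef
  have hKle : ∀ i, K ≤ H i := fun i => iInf_le H i
  have hKfin : K.FiniteIndex := Subgroup.finiteIndex_iInf hfin
  haveI : Finite (G ⧸ K) := Subgroup.finite_quotient_of_finiteIndex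
  haveI : Fintype (G ⧸ K) := Fintype.ofFinite _
  -- the index function is constant on left `K`-cosets
  have hconst : ∀ a b : G, @Setoid.r _ (QuotientGroup.leftRel K) a b →
      (fun g : G => (hpart' g).choose) a = (fun g : G => (hpart' g).choose) b := by
    intro a b hab
    rw [QuotientGroup.leftRel_apply] at hab
    obtain ⟨i, hi, hu⟩ := hpart' a
    have ha : (hpart' a).choose = i := hu _ (hpart' a).choose_spec.1
    have hb : (hpart' b).choose = i := by
      have hmem : α i * b ∈ H i := by
        have : (α i * a) * (a⁻¹ * b) ∈ H i := (H i).mul_mem hi (hKle i hab)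
        simpa [mul_assoc] using this
      exact (hpart' b).choose_spec.2 i hmem ▸ rfl
    exact ha.trans hb.symm
  let φ : G ⧸ K → Fin s := fun x => Quotient.liftOn' x (fun g : G => (hpart' g).choose) hconst
  have hφ : ∀ (g : G) (i : Fin s), φ (QuotientGroup.mk g) = i ↔ α i * g ∈ H i := by
    intro g i
    constructor
    · intro h
      have : (hpart' g).choose = i := h
      exact this ▸ (hpart' g).choose_spec.1
    · intro h
      exact ((hpart' g).choose_spec.2 i h).symm ▸ rfl
  -- fiber of φ over i is in bijection with (H i) ⧸ K
  have hfiber : ∀ i : Fin s, Nat.card {x : G ⧸ K // φ x = i} = K.relIndex (H i) := by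
    intro i
    rw [Subgroup.relIndex, Subgroup.index_eq_card]
    refine (Nat.card_eq_of_bijective (fun x => ?_) ?_).symm
    · refine Quotient.liftOn' x (fun h => ⟨QuotientGroup.mk ((α i)⁻¹ * (h : G)), ?_⟩) ?_
      · exact (hφ _ i).2 (by simp)
      · intro a b hab
        rw [QuotientGroup.leftRel_apply] at hab
        have : ((α i)⁻¹ * (a : G))⁻¹ * ((α i)⁻¹ * (b : G)) ∈ K := by
          have := hab
          simp only [Subgroup.mem_subgroupOf] at this
          simpa [mul_assoc] using this
        exact Subtype.ext (QuotientGroup.eq.mpr this)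
    · constructor
      · intro x y hab
        obtain ⟨a, rfl⟩ := QuotientGroup.mk_surjective x
        obtain ⟨b, rfl⟩ := QuotientGroup.mk_surjective y
        have hab' : (QuotientGroup.mk ((α i)⁻¹ * (a : G)) : G ⧸ K) =
            QuotientGroup.mk ((α i)⁻¹ * (b : G)) := congrArg Subtype.val hab
        apply Quotient.sound'
        rw [QuotientGroup.leftRel_apply]
        have := QuotientGroup.eq.mp hab'
        simp only [Subgroup.mem_subgroupOf]
        simpa [mul_assoc] using this
      · rintro ⟨x, hx⟩
        obtain ⟨g, rfl⟩ := QuotientGroup.mk_surjective x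
        have hg : α i * g ∈ H i := (hφ g i).1 hx
        refine ⟨QuotientGroup.mk ⟨α i * g, hg⟩, ?_⟩
        apply Subtype.ext
        simp [QuotientGroup.eq, inv_mul_cancel_left]
  -- summing fiber sizes gives the total
  have hsum : ∑ i : Fin s, K.relIndex (H i) = K.index := by
    rw [Subgroup.index_eq_card, Nat.card_eq_fintype_card, ← Finset.card_univ]
    rw [Finset.card_eq_sum_card_fiberwise (f := φ) (t := Finset.univ)
      (fun x _ => Finset.mem_univ _)]
    refine Finset.sum_congr rfl fun i _ => ?_
    rw [← hfiber i, Nat.card_eq_fintype_card, Fintype.card_subtype]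
  have hK0 : (K.index : ℚ) ≠ 0 := Nat.cast_ne_zero.mpr hKfin.index_ne_zero
  have key : ∀ i : Fin s, (1 : ℚ) / ((H i).index : ℚ) = (K.relIndex (H i) : ℚ) / K.index := by
    intro i
    have h1 : (K.relIndex (H i) : ℚ) * (H i).index = K.index := by
      exact_mod_cast congrArg Nat.cast (Subgroup.relIndex_mul_index (hKle i))
    have hH0 : ((H i).index : ℚ) ≠ 0 := Nat.cast_ne_zero.mpr (hfin i).index_ne_zero
    field_simp
    linarith [h1]
  calc ∑ i : Fin s, (1 : ℚ) / ((H i).index : ℚ)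
      = ∑ i : Fin s, (K.relIndex (H i) : ℚ) / K.index := Finset.sum_congr rfl fun i _ => key i
    _ = (∑ i : Fin s, (K.relIndex (H i) : ℚ)) / K.index := by rw [Finset.sum_div]
    _ = 1 := by
        rw [← Nat.cast_sum, hsum]
        exact div_self hK0
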